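/- Let (Y;S) be a primitive representation of a finite semigroup on a finite set Y with |Y| > 2 and let J be its set of minimal functions. Then for every pair of distinct elements a, b ∈ Y there exists an idempotent e ∈ J with e(a) ≠ e(b). In particular, the only equivalence θ on Y such that j(a') = j(b') for all (a',b') ∈ θ and all j ∈ J is the diagonal. -/
import Mathlib


section TransformationReps

variable {Y : Type*}

/-- `W` is a minimal set of the representation given by the set `T` of transformations:
it is a non-singleton image set which is minimal among non-singleton image sets. -/
def MinSet (T : Set (Y → Y)) (W : Set Y) : Prop :=
  2 ≤ W.ncard ∧ (∃ s ∈ T, Set.range s = W) ∧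
    ∀ t ∈ T, 2 ≤ (Set.range t).ncard → Set.range t ⊆ W → Set.range t = W

/-- A minimal function: an element of `T` whose image is a minimal set. -/
def MinFun (T : Set (Y → Y)) (f : Y → Y) : Prop :=
  f ∈ T ∧ MinSet T (Set.range f)

/-- The representation given by the set `T` of transformations of `Y` is primitive. -/
def PrimitiveRep (T : Set (Y → Y)) : Prop :=
  ∀ θ : Y → Y → Prop, Equivalence θ →
    (∀ a b, θ a b → ∀ f ∈ T, θ (f a) (f b)) →
    (∀ a b, θ a b → a = b) ∨ (∀ a b, θ a b)

end TransformationReps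

section Aux

variable {Y : Type*} [Fintype Y]

/-- If the range of `f` has fewer than two elements then `f` is constant. -/
private lemma aux_const_of_small {f : Y → Y} (h : ¬ 2 ≤ (Set.range f).ncard)
    (z w : Y) : f z = f w := by
  by_contra hne
  exact h ((Set.one_lt_ncard_iff (Set.toFinite _)).mpr ⟨f z, f w, Set.mem_range_self z, Set.mem_range_self w, hne⟩)

/-- A nonconstant function has range of size at least two. -/
private lemma aux_two_le {f : Y → Y} {z w : Y} (h : f z ≠ f w) :
    2 ≤ (Set.range f).ncard :=
  (Set.one_lt_ncard_iff (Set.toFinite _)).mpr ⟨f z, f w, Set.mem_range_self z, Set.mem_range_self w, h⟩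

/-- Key construction: given `p ∈ T` of minimal rank `m` which maps its own range onto
itself and separates `a` and `b`, some iterate of `p` is an idempotent minimal function
separating `a` and `b`. -/
private lemma aux_key {T : Set (Y → Y)}
    (Tcomp : ∀ {f g : Y → Y}, f ∈ T → g ∈ T → f ∘ g ∈ T)
    {m : ℕ} (hm2 : 2 ≤ m)
    (hmin : ∀ u ∈ T, 2 ≤ (Set.range u).ncard → m ≤ (Set.range u).ncard)
    {p : Y → Y} {a b : Y} (hp : p ∈ T)
    (hcardp : (Set.range p).ncard = m)
    (hpU : p '' (Set.range p) = Set.range p)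
    (hpab : p a ≠ p b) :
    ∃ e, MinFun T e ∧ e ∘ e = e ∧ e a ≠ e b := by
  classical
  set U := Set.range p with hUdef
  have hinj : Set.InjOn p U := Set.injOn_of_ncard_image_eq (by rw [hpU])
  have hmem : ∀ x : Y, x ∈ U → p x ∈ U := fun x hx => hpU ▸ Set.mem_image_of_mem p hx
  let g : U → U := fun x => ⟨p x.1, hmem _ x.2⟩
  have hginj : Function.Injective g := fun x y hxy =>
    Subtype.ext (hinj x.2 y.2 (congrArg Subtype.val hxy))
  have hgbij : Function.Bijective g := Finite.injective_iff_bijective.mp hginj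
  let gE : Equiv.Perm U := Equiv.ofBijective g hgbij
  set N := orderOf gE with hNdef
  have hNpos : 0 < N := orderOf_pos gE
  have hgEN : gE ^ N = 1 := pow_orderOf_eq_one gE
  have hiter : ∀ (n : ℕ) (x : U), p^[n] x.1 = ((gE ^ n) x).1 := by
    intro n
    induction n with
    | zero => intro x; simp
    | succ k ih =>
      intro x
      rw [Function.iterate_succ_apply]
      have h1 : p x.1 = (gE x).1 := rfl
      rw [h1, ih (gE x), pow_succ, Equiv.Perm.mul_apply]
  have hfix : ∀ x, x ∈ U → p^[N] x = x := by
    intro x hx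
    have := hiter N ⟨x, hx⟩
    rw [hgEN] at this
    simpa using this
  obtain ⟨N', hN'⟩ : ∃ N', N = N' + 1 := ⟨N - 1, (Nat.succ_pred_eq_of_pos hNpos).symm⟩
  have heT : p^[N] ∈ T := by
    have hiterT : ∀ n : ℕ, p^[n + 1] ∈ T := by
      intro n
      induction n with
      | zero => simpa using hp
      | succ k ih =>
        rw [Function.iterate_succ']
        exact Tcomp hp ih
    rw [hN']; exact hiterT N'
  have hrange : Set.range (p^[N]) = U := by
    apply subset_antisymm
    · rintro y ⟨x, hx⟩
      rw [hN', Function.iterate_succ_apply'] at hx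
      exact hx ▸ ⟨_, rfl⟩
    · exact fun x hx => ⟨x, hfix x hx⟩
  have hid : p^[N] ∘ p^[N] = p^[N] := by
    funext y
    have hy : p^[N] y ∈ U := hrange ▸ Set.mem_range_self y
    exact hfix _ hy
  have hpa : p a ∈ U := Set.mem_range_self a
  have hpb : p b ∈ U := Set.mem_range_self b
  have hNab : p^[N] a ≠ p^[N] b := by
    intro h
    rw [hN', Function.iterate_succ_apply, Function.iterate_succ_apply] at h
    have h1 := hiter N' ⟨p a, hpa⟩
    have h2 := hiter N' ⟨p b, hpb⟩
    have h3 : (gE ^ N') ⟨p a, hpa⟩ = (gE ^ N') ⟨p b, hpb⟩ :=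
      Subtype.ext (by rw [← h1, ← h2]; exact h)
    exact hpab (congrArg Subtype.val ((Equiv.injective _) h3))
  have hcardU : (Set.range (p^[N])).ncard = m := by rw [hrange]; exact hcardp
  refine ⟨p^[N], ⟨heT, ?_, ⟨p^[N], heT, rfl⟩, ?_⟩, hid, hNab⟩
  · rw [hcardU]; exact hm2
  · intro t' ht' h2' hsub
    exact Set.eq_of_subset_of_ncard_le hsub (by rw [hcardU]; exact hmin t' ht' h2')

end Aux

/-- Let `(Y;S)` be a primitive representation with `|Y| > 2` and let `J` be its set of
minimal functions.  Then for distinct `a, b ∈ Y` there is an idempotent `e ∈ J` with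
`e(a) ≠ e(b)`; in particular the only equivalence relation `θ` on `Y` such that every
element of `J` identifies every `θ`-pair is the diagonal (the representation `(Y;J)` is
reduced). -/
theorem primitive_minimal_functions_separate {S Y : Type*} [Semigroup S] [Fintype S]
    [Fintype Y] (γ : S → Y → Y) (hγ : ∀ s t : S, γ (s * t) = γ s ∘ γ t)
    (hcard : 2 < Fintype.card Y)
    (hprim : PrimitiveRep (Set.range γ)) :
    (∀ a b : Y, a ≠ b →
      ∃ e : Y → Y, MinFun (Set.range γ) e ∧ e ∘ e = e ∧ e a ≠ e b) ∧
    (∀ θ : Y → Y → Prop, Equivalence θ →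
      (∀ a b, θ a b → ∀ j : Y → Y, MinFun (Set.range γ) j → j a = j b) →
      ∀ a b, θ a b → a = b) := by
  classical
  set T : Set (Y → Y) := Set.range γ with hTdef
  have Tcomp : ∀ {f g : Y → Y}, f ∈ T → g ∈ T → f ∘ g ∈ T := by
    rintro f g ⟨σ, rfl⟩ ⟨τ, rfl⟩
    exact ⟨σ * τ, hγ σ τ⟩
  -- Step 1: there is a nonconstant transformation in `T`.
  have hexists : ∃ f ∈ T, ∃ z w : Y, f z ≠ f w := by
    by_contra hcon
    push_neg at hcon
    obtain ⟨a₀, b₀, c₀, hab₀, hac₀, hbc₀⟩ := Fintype.two_lt_card_iff.mp hcard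
    set θ : Y → Y → Prop := fun z w =>
      z = w ∨ (z ∈ ({a₀, b₀} : Set Y) ∧ w ∈ ({a₀, b₀} : Set Y)) with hθdef
    have hEq : Equivalence θ := by
      constructor
      · exact fun z => Or.inl rfl
      · rintro x y (rfl | ⟨hx, hy⟩)
        · exact Or.inl rfl
        · exact Or.inr ⟨hy, hx⟩
      · rintro x y z (rfl | ⟨hx, hy⟩) (rfl | ⟨hy', hz⟩)
        · exact Or.inl rfl
        · exact Or.inr ⟨hy', hz⟩
        · exact Or.inr ⟨hx, hy⟩
        · exact Or.inr ⟨hx, hz⟩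
    have hComp : ∀ x y, θ x y → ∀ f ∈ T, θ (f x) (f y) :=
      fun x y _ f hf => Or.inl (hcon f hf x y)
    rcases hprim θ hEq hComp with hd | hfull
    · exact hab₀ (hd a₀ b₀ (Or.inr ⟨Or.inl rfl, Or.inr rfl⟩))
    · rcases hfull a₀ c₀ with h | ⟨-, hc⟩
      · exact hac₀ h
      · rcases hc with h | h
        · exact hac₀ h.symm
        · exact hbc₀ h.symm
  -- the minimal rank `m`
  have hQ : ∃ n : ℕ, ∃ t, t ∈ T ∧ 2 ≤ (Set.range t).ncard ∧ (Set.range t).ncard = n := by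
    obtain ⟨f, hf, z, w, hzw⟩ := hexists
    exact ⟨(Set.range f).ncard, f, hf, aux_two_le hzw, rfl⟩
  set m := Nat.find hQ with hmdef
  obtain ⟨t₀, ht₀, ht₀2, ht₀m⟩ := Nat.find_spec hQ
  have hm2 : 2 ≤ m := by rw [hmdef, ← ht₀m]; exact ht₀2
  have hmin : ∀ u ∈ T, 2 ≤ (Set.range u).ncard → m ≤ (Set.range u).ncard :=
    fun u hu h2 => Nat.find_min' hQ ⟨u, hu, h2, rfl⟩
  -- Step 2: rank-`m` separators exist for every pair of distinct points.
  have hsepm : ∀ z w : Y, z ≠ w → ∃ u, u ∈ T ∧ (Set.range u).ncard = m ∧ u z ≠ u w := by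
    intro z w hzw
    by_contra hcon
    push_neg at hcon
    set θ : Y → Y → Prop := fun x y => ∀ u, u ∈ T → (Set.range u).ncard = m → u x = u y
      with hθdef
    have hEq : Equivalence θ := by
      constructor
      · exact fun x u _ _ => rfl
      · exact fun h u hu hm => (h u hu hm).symm
      · exact fun h h' u hu hm => (h u hu hm).trans (h' u hu hm)
    have hComp : ∀ x y, θ x y → ∀ f ∈ T, θ (f x) (f y) := by
      intro x y hxy f hf u hu hum
      by_cases h2 : 2 ≤ (Set.range (u ∘ f)).ncard
      · have hle : (Set.range (u ∘ f)).ncard ≤ m := by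
          rw [← hum]
          exact Set.ncard_le_ncard (Set.range_comp_subset_range f u) (Set.toFinite _)
        exact hxy (u ∘ f) (Tcomp hu hf) (le_antisymm hle (hmin _ (Tcomp hu hf) h2))
      · exact aux_const_of_small h2 x y
    rcases hprim θ hEq hComp with hd | hfull
    · refine hzw (hd z w ?_)
      intro u hu hum
      exact hcon u hu hum
    · obtain ⟨x, y, hx, hy, hxy⟩ := (Set.one_lt_ncard_iff (Set.toFinite _)).mp ht₀2
      obtain ⟨x', rfl⟩ := hx
      obtain ⟨y', rfl⟩ := hy
      exact hxy (hfull x' y' t₀ ht₀ ht₀m)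
  -- the main statement (part 1)
  have main : ∀ a b : Y, a ≠ b →
      ∃ e : Y → Y, MinFun T e ∧ e ∘ e = e ∧ e a ≠ e b := by
    intro a b hab
    obtain ⟨t, ht, htm, htab⟩ := hsepm a b hab
    -- Step 3: find `s` (or `id`) such that `t ∘ s ∘ t` is nonconstant.
    have hF3 : (t (t a) ≠ t (t b)) ∨ ∃ s, s ∈ T ∧ t (s (t a)) ≠ t (s (t b)) := by
      by_contra hcon
      push_neg at hcon
      obtain ⟨h1, h2⟩ := hcon
      set θ : Y → Y → Prop := fun z w => t z = t w ∧ ∀ s ∈ T, t (s z) = t (s w) with hθdef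
      have hEq : Equivalence θ := by
        constructor
        · exact fun z => ⟨rfl, fun s _ => rfl⟩
        · exact fun h => ⟨h.1.symm, fun s hs => (h.2 s hs).symm⟩
        · exact fun h h' => ⟨h.1.trans h'.1, fun s hs => (h.2 s hs).trans (h'.2 s hs)⟩
      have hComp : ∀ z w, θ z w → ∀ f ∈ T, θ (f z) (f w) := by
        intro z w h f hf
        exact ⟨h.2 f hf, fun s hs => h.2 (s ∘ f) (Tcomp hs hf)⟩
      rcases hprim θ hEq hComp with hd | hfull
      · exact htab (hd (t a) (t b) ⟨h1, fun s hs => h2 s hs⟩)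
      · obtain ⟨x, y, hx, hy, hxy⟩ :=
          (Set.one_lt_ncard_iff (Set.toFinite _)).mp (htm ▸ hm2 : 2 ≤ (Set.range t).ncard)
        obtain ⟨x', rfl⟩ := hx
        obtain ⟨y', rfl⟩ := hy
        exact hxy (hfull x' y').1
    rcases hF3 with hA | ⟨s, hs, hB⟩
    · -- Case A : `t` maps its range onto itself.
      have hu2 : 2 ≤ (Set.range (t ∘ t)).ncard := aux_two_le (f := t ∘ t) (z := a) (w := b) hA
      have hum : m ≤ (Set.range (t ∘ t)).ncard := hmin _ (Tcomp ht ht) hu2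
      have hrc : Set.range (t ∘ t) = t '' Set.range t := Set.range_comp t t
      have hsub : t '' Set.range t ⊆ Set.range t := Set.image_subset_range t _
      have himeq : t '' Set.range t = Set.range t := by
        apply Set.eq_of_subset_of_ncard_le hsub
        rw [htm, ← hrc]; exact hum
      exact aux_key (T := T) Tcomp hm2 hmin ht htm himeq htab
    · -- Case B : `t ∘ s ∘ t` is nonconstant; use `p := s ∘ t`.
      have huT : (t ∘ (s ∘ t)) ∈ T := Tcomp ht (Tcomp hs ht)
      have hu2 : 2 ≤ (Set.range (t ∘ (s ∘ t))).ncard :=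
        aux_two_le (f := t ∘ (s ∘ t)) (z := a) (w := b) hB
      have hum : m ≤ (Set.range (t ∘ (s ∘ t))).ncard := hmin _ huT hu2
      have hrc : Set.range (t ∘ (s ∘ t)) = t '' (s '' Set.range t) := by
        rw [Set.range_comp, Set.range_comp]
      have hle1 : (t '' (s '' Set.range t)).ncard ≤ (s '' Set.range t).ncard :=
        Set.ncard_image_le (Set.toFinite _)
      have hle2 : (s '' Set.range t).ncard ≤ m := by
        rw [← htm]; exact Set.ncard_image_le (Set.toFinite _)
      have hts_eq : (t '' (s '' Set.range t)).ncard = m :=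
        le_antisymm (le_trans hle1 hle2) (by rw [← hrc]; exact hum)
      have hs_eq : (s '' Set.range t).ncard = m :=
        le_antisymm hle2 (le_trans (by rw [← hrc]; exact hum) hle1)
      have htsV : t '' (s '' Set.range t) = Set.range t := by
        apply Set.eq_of_subset_of_ncard_le (Set.image_subset_range t _)
        rw [htm, hts_eq]
      have hinjs : Set.InjOn s (Set.range t) :=
        Set.injOn_of_ncard_image_eq (by rw [hs_eq, htm])
      have hrp : Set.range (s ∘ t) = s '' Set.range t := Set.range_comp s t
      have hcardp : (Set.range (s ∘ t)).ncard = m := by rw [hrp]; exact hs_eq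
      have hpU : (s ∘ t) '' Set.range (s ∘ t) = Set.range (s ∘ t) := by
        rw [hrp, Set.image_comp, htsV]
      have hpab : (s ∘ t) a ≠ (s ∘ t) b := by
        intro h
        exact htab (hinjs (Set.mem_range_self a) (Set.mem_range_self b) h)
      exact aux_key (T := T) Tcomp hm2 hmin (Tcomp hs ht) hcardp hpU hpab
  refine ⟨main, ?_⟩
  intro θ hθ hsep a b hab
  by_contra hne
  obtain ⟨e, he, -, hne'⟩ := main a b hne
  exact hne' (hsep a b hab e he)
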